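/- Let Γ_0 be the subgraph of M_k(q) induced by the color-0 edges. Then Γ_0 is the disjoint union of q+1 color-0 cliques of order k: the relation on the vertex set of M_k(q) given by 'u = v, or u → v and v → u are both edges of color 0' is an equivalence relation with exactly q+1 equivalence classes, each of size k, and within each class every pair of distinct vertices is joined by two oppositely oriented color-0 edges. -/

import Mathlib

/-- `S_k = ⟨ω^k⟩`, the set of nonzero `k`-th power residues of `F`
(for `ω` a primitive element of the finite field `F`). -/
def Sk {F : Type} [Field F] (ω : F) (k : ℕ) : Set F :=
  {x | ∃ n : ℕ, x = ω ^ (k * n)}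

/-- `S_{k,0} = {0}` and `S_{k,i} = ω^(i-1) • S_k` for `i ≥ 1`. -/
def Ski {F : Type} [Field F] (ω : F) (k : ℕ) : ℕ → Set F
  | 0 => {0}
  | (i + 1) => {x | ∃ n : ℕ, x = ω ^ i * ω ^ (k * n)}

/-- The vertex set of the Mathon-type digraph `M_k(q)`: equivalence classes of
`X = (F × F) \ {(0,0)}` under `(a,b) ~ (ag,bg)` for `g ∈ S_k`. -/
def Vtx (F : Type) [Field F] (ω : F) (k : ℕ) : Type :=
  Quot (fun p q : {p : F × F // p ≠ (0, 0)} =>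
    ∃ g ∈ Sk ω k, q.1 = (p.1.1 * g, p.1.2 * g))

/-- The equivalence class `[a, b]` of a nonzero pair `(a, b)`. -/
def vmk {F : Type} [Field F] (ω : F) (k : ℕ) (p : {p : F × F // p ≠ (0, 0)}) :
    Vtx F ω k :=
  Quot.mk _ p

/-- `[a,b] → [c,d]` is an edge of color `i` in `M_k(q)` iff `bc - ad ∈ S_{k,i}`
(well-defined since `g S_{k,i} = S_{k,i}` for `g ∈ S_k`). -/
def Edge {F : Type} [Field F] (ω : F) (k : ℕ) (u v : Vtx F ω k) (i : ℕ) : Prop :=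
  ∃ p q : {p : F × F // p ≠ (0, 0)},
    u = vmk ω k p ∧ v = vmk ω k q ∧
      p.1.2 * q.1.1 - p.1.1 * q.1.2 ∈ Ski ω k i

/-- The relation "`u = v`, or `u → v` and `v → u` are both color-0 edges". -/
def Rel0 {F : Type} [Field F] (ω : F) (k : ℕ) (u v : Vtx F ω k) : Prop :=
  u = v ∨ (Edge ω k u v 0 ∧ Edge ω k v u 0)

namespace Stmt14Aux

set_option linter.unusedSectionVars false

variable {F : Type} [Field F] [Fintype F] {ω : F} {k : ℕ}

/-- scaling a nonzero pair by a nonzero scalar -/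
def scl (p : {p : F × F // p ≠ (0, 0)}) {t : F} (ht : t ≠ 0) :
    {p : F × F // p ≠ (0, 0)} :=
  ⟨(p.1.1 * t, p.1.2 * t), by
    intro h
    rw [Prod.mk.injEq, mul_eq_zero, mul_eq_zero] at h
    exact p.2 (Prod.ext_iff.mpr ⟨h.1.resolve_right ht, h.2.resolve_right ht⟩)⟩

lemma scl_coe (p : {p : F × F // p ≠ (0, 0)}) {t : F} (ht : t ≠ 0) :
    (scl p ht).1 = (p.1.1 * t, p.1.2 * t) := rfl

lemma sk_ne_zero (hω0 : ω ≠ 0) {g : F} (hg : g ∈ Sk ω k) : g ≠ 0 := by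
  obtain ⟨n, rfl⟩ := hg
  exact pow_ne_zero _ hω0

lemma sk_one : (1 : F) ∈ Sk ω k := ⟨0, by simp⟩

lemma sk_inv (hN : 0 < orderOf ω) {g : F} (hg : g ∈ Sk ω k) :
    ∃ h ∈ Sk ω k, g * h = 1 := by
  obtain ⟨n, rfl⟩ := hg
  obtain ⟨N, hNe⟩ : ∃ N, orderOf ω = N + 1 := ⟨orderOf ω - 1, by omega⟩
  refine ⟨ω ^ (k * (n * N)), ⟨n * N, rfl⟩, ?_⟩
  rw [← pow_add]
  have he : k * n + k * (n * N) = orderOf ω * (k * n) := by rw [hNe]; ring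
  rw [he, pow_mul, pow_orderOf_eq_one, one_pow]

lemma r_equiv (hω0 : ω ≠ 0) (hN : 0 < orderOf ω) :
    Equivalence (fun p q : {p : F × F // p ≠ (0, 0)} =>
      ∃ g ∈ Sk ω k, q.1 = (p.1.1 * g, p.1.2 * g)) := by
  constructor
  · intro p
    exact ⟨1, sk_one, by simp⟩
  · rintro p q ⟨g, hg, hpq⟩
    obtain ⟨h, hh, hgh⟩ := sk_inv hN hg
    have e1 : q.1.1 = p.1.1 * g := by rw [hpq]
    have e2 : q.1.2 = p.1.2 * g := by rw [hpq]
    refine ⟨h, hh, Prod.ext_iff.mpr ⟨?_, ?_⟩⟩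
    · show p.1.1 = q.1.1 * h
      rw [e1, mul_assoc, hgh, mul_one]
    · show p.1.2 = q.1.2 * h
      rw [e2, mul_assoc, hgh, mul_one]
  · rintro p q r ⟨g, hg, hpq⟩ ⟨h, hh, hqr⟩
    obtain ⟨n, rfl⟩ := hg
    obtain ⟨m, rfl⟩ := hh
    have e1 : q.1.1 = p.1.1 * ω ^ (k * n) := by rw [hpq]
    have e2 : q.1.2 = p.1.2 * ω ^ (k * n) := by rw [hpq]
    have f1 : r.1.1 = q.1.1 * ω ^ (k * m) := by rw [hqr]
    have f2 : r.1.2 = q.1.2 * ω ^ (k * m) := by rw [hqr]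
    refine ⟨ω ^ (k * (n + m)), ⟨n + m, rfl⟩, Prod.ext_iff.mpr ⟨?_, ?_⟩⟩
    · show r.1.1 = p.1.1 * ω ^ (k * (n + m))
      rw [f1, e1, mul_assoc, ← pow_add, ← Nat.mul_add]
    · show r.1.2 = p.1.2 * ω ^ (k * (n + m))
      rw [f2, e2, mul_assoc, ← pow_add, ← Nat.mul_add]

lemma vmk_eq_iff (hω0 : ω ≠ 0) (hN : 0 < orderOf ω)
    {p q : {p : F × F // p ≠ (0, 0)}} :
    vmk ω k p = vmk ω k q ↔ ∃ g ∈ Sk ω k, q.1 = (p.1.1 * g, p.1.2 * g) := by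
  constructor
  · intro h
    exact ((r_equiv (k := k) hω0 hN).eqvGen_iff).mp (Quot.eq.mp h)
  · intro h
    exact Quot.sound h

lemma edge0_iff (hω0 : ω ≠ 0) (hN : 0 < orderOf ω) {u v : Vtx F ω k} :
    Edge ω k u v 0 ↔ ∀ p q, u = vmk ω k p → v = vmk ω k q →
      p.1.2 * q.1.1 - p.1.1 * q.1.2 = 0 := by
  constructor
  · rintro ⟨p₀, q₀, hu, hv, hdet⟩ p q hp hq
    have hdet0 : p₀.1.2 * q₀.1.1 - p₀.1.1 * q₀.1.2 = 0 := hdet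
    obtain ⟨g, hg, hpg⟩ := (vmk_eq_iff hω0 hN).mp (hp.symm.trans hu)
    obtain ⟨h, hh, hqh⟩ := (vmk_eq_iff hω0 hN).mp (hq.symm.trans hv)
    have e1 : p₀.1.1 = p.1.1 * g := by rw [hpg]
    have e2 : p₀.1.2 = p.1.2 * g := by rw [hpg]
    have e3 : q₀.1.1 = q.1.1 * h := by rw [hqh]
    have e4 : q₀.1.2 = q.1.2 * h := by rw [hqh]
    have key : (p.1.2 * q.1.1 - p.1.1 * q.1.2) * (g * h) =
        p₀.1.2 * q₀.1.1 - p₀.1.1 * q₀.1.2 := by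
      rw [e1, e2, e3, e4]; ring
    rw [hdet0] at key
    rcases mul_eq_zero.mp key with h' | h'
    · exact h'
    · exact absurd (mul_eq_zero.mp h')
        (by push_neg; exact ⟨sk_ne_zero hω0 hg, sk_ne_zero hω0 hh⟩)
  · intro h
    obtain ⟨p, hp⟩ := Quot.exists_rep u
    obtain ⟨q, hq⟩ := Quot.exists_rep v
    exact ⟨p, q, hp.symm, hq.symm, h p q hp.symm hq.symm⟩

lemma rel0_iff (hω0 : ω ≠ 0) (hN : 0 < orderOf ω) {u v : Vtx F ω k} :
    Rel0 ω k u v ↔ ∀ p q, u = vmk ω k p → v = vmk ω k q →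
      p.1.2 * q.1.1 - p.1.1 * q.1.2 = 0 := by
  constructor
  · rintro (rfl | ⟨he, _⟩)
    · intro p q hp hq
      obtain ⟨g, hg, hpg⟩ := (vmk_eq_iff hω0 hN).mp (hp.symm.trans hq)
      have h1 : q.1.1 = p.1.1 * g := by rw [hpg]
      have h2 : q.1.2 = p.1.2 * g := by rw [hpg]
      rw [h1, h2]; ring
    · exact (edge0_iff hω0 hN).mp he
  · intro h
    right
    refine ⟨(edge0_iff hω0 hN).mpr h, (edge0_iff hω0 hN).mpr ?_⟩
    intro p q hp hq
    have h' := h q p hq hp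
    linear_combination -h'

lemma rel0_refl {u : Vtx F ω k} : Rel0 ω k u u := Or.inl rfl

lemma rel0_symm {u v : Vtx F ω k} (h : Rel0 ω k u v) : Rel0 ω k v u := by
  rcases h with rfl | ⟨h1, h2⟩
  · exact Or.inl rfl
  · exact Or.inr ⟨h2, h1⟩

lemma det_aux {a b c d e f : F} (h1 : b * c - a * d = 0) (h2 : d * e - c * f = 0)
    (hcd : ¬(c = 0 ∧ d = 0)) : b * e - a * f = 0 := by
  rcases eq_or_ne c 0 with hc | hc
  · have hd : d ≠ 0 := fun hd => hcd ⟨hc, hd⟩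
    subst hc
    have ha : a = 0 := by
      have had : a * d = 0 := by linear_combination -h1
      exact (mul_eq_zero.mp had).resolve_right hd
    have he : e = 0 := by
      have hde : d * e = 0 := by linear_combination h2
      exact (mul_eq_zero.mp hde).resolve_left hd
    rw [ha, he]; ring
  · have key : (b * e - a * f) * c = (d * e - c * f) * a + (b * c - a * d) * e := by
      ring
    rw [h1, h2] at key
    simp only [zero_mul, add_zero] at key
    exact (mul_eq_zero.mp key).resolve_right hc

lemma rel0_trans (hω0 : ω ≠ 0) (hN : 0 < orderOf ω) {u v w : Vtx F ω k}
    (huv : Rel0 ω k u v) (hvw : Rel0 ω k v w) : Rel0 ω k u w := by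
  rw [rel0_iff hω0 hN] at huv hvw ⊢
  intro p r hp hr
  obtain ⟨q, hq⟩ := Quot.exists_rep v
  have h1 := huv p q hp hq.symm
  have h2 := hvw q r hq.symm hr
  refine det_aux h1 h2 ?_
  intro ⟨hc, hd⟩
  exact q.2 (Prod.ext_iff.mpr ⟨hc, hd⟩)

lemma rel0_of_det {p q : {p : F × F // p ≠ (0, 0)}}
    (h : p.1.2 * q.1.1 - p.1.1 * q.1.2 = 0) :
    Rel0 ω k (vmk ω k p) (vmk ω k q) := by
  right
  constructor
  · exact ⟨p, q, rfl, rfl, h⟩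
  · refine ⟨q, p, rfl, rfl, ?_⟩
    show q.1.2 * p.1.1 - q.1.1 * p.1.2 = 0
    linear_combination -h

lemma prop_of_det {p q : {p : F × F // p ≠ (0, 0)}}
    (h : p.1.2 * q.1.1 - p.1.1 * q.1.2 = 0) :
    ∃ t : F, t ≠ 0 ∧ q.1 = (p.1.1 * t, p.1.2 * t) := by
  rcases eq_or_ne p.1.1 0 with ha | ha
  · have hb : p.1.2 ≠ 0 := by
      intro hb; exact p.2 (Prod.ext_iff.mpr ⟨ha, hb⟩)
    have hc : q.1.1 = 0 := by
      have h' : p.1.2 * q.1.1 = 0 := by rw [ha] at h; linear_combination h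
      exact (mul_eq_zero.mp h').resolve_left hb
    have hd : q.1.2 ≠ 0 := by
      intro hd; exact q.2 (Prod.ext_iff.mpr ⟨hc, hd⟩)
    refine ⟨q.1.2 / p.1.2, div_ne_zero hd hb, Prod.ext_iff.mpr ⟨?_, ?_⟩⟩
    · show q.1.1 = p.1.1 * (q.1.2 / p.1.2)
      rw [ha, hc, zero_mul]
    · show q.1.2 = p.1.2 * (q.1.2 / p.1.2)
      field_simp
  · refine ⟨q.1.1 / p.1.1, ?_, Prod.ext_iff.mpr ⟨?_, ?_⟩⟩
    · intro ht
      have hc : q.1.1 = 0 := (div_eq_zero_iff.mp ht).resolve_right ha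
      have hd : q.1.2 = 0 := by
        have h2 : p.1.1 * q.1.2 = 0 := by rw [hc] at h; linear_combination -h
        exact (mul_eq_zero.mp h2).resolve_left ha
      exact q.2 (Prod.ext_iff.mpr ⟨hc, hd⟩)
    · show q.1.1 = p.1.1 * (q.1.1 / p.1.1)
      field_simp
    · show q.1.2 = p.1.2 * (q.1.1 / p.1.1)
      field_simp
      linear_combination -h

open scoped Classical in
/-- every vertex in the `Rel0`-class of `vmk p` is `vmk (p · ω^j)` for some `j < k` -/
lemma class_eq_image (hω0 : ω ≠ 0) (hN : 0 < orderOf ω) (hk : 0 < k)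
    (hωgen : ∀ x : F, x ≠ 0 → ∃ n : ℕ, x = ω ^ n)
    (p : {p : F × F // p ≠ (0, 0)}) :
    {v | Rel0 ω k (vmk ω k p) v} =
      ↑((Finset.range k).image fun j => vmk ω k (scl p (pow_ne_zero j hω0))) := by
  ext v
  simp only [Set.mem_setOf_eq, Finset.coe_image, Finset.coe_range, Set.mem_image,
    Set.mem_Iio]
  constructor
  · intro hv
    obtain ⟨q, hq⟩ := Quot.exists_rep v
    have hdet := (rel0_iff hω0 hN).mp hv p q rfl hq.symm
    obtain ⟨t, ht, hqt⟩ := prop_of_det hdet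
    obtain ⟨n, rfl⟩ := hωgen t ht
    refine ⟨n % k, Nat.mod_lt _ hk, ?_⟩
    rw [← hq]
    show vmk ω k (scl p (pow_ne_zero (n % k) hω0)) = vmk ω k q
    rw [vmk_eq_iff hω0 hN]
    refine ⟨ω ^ (k * (n / k)), ⟨n / k, rfl⟩, ?_⟩
    have hsplit : ω ^ n = ω ^ (n % k) * ω ^ (k * (n / k)) := by
      rw [← pow_add, Nat.mod_add_div]
    rw [hqt]
    simp only [scl_coe, Prod.mk.injEq]
    rw [hsplit]
    exact ⟨by ring, by ring⟩
  · rintro ⟨j, hj, rfl⟩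
    apply rel0_of_det
    show p.1.2 * (p.1.1 * ω ^ j) - p.1.1 * (p.1.2 * ω ^ j) = 0
    ring

set_option maxHeartbeats 1000000 in
open scoped Classical in
lemma class_ncard (hω0 : ω ≠ 0) (hN : 0 < orderOf ω) (hk : 0 < k)
    (hkd : k ∣ orderOf ω)
    (hωgen : ∀ x : F, x ≠ 0 → ∃ n : ℕ, x = ω ^ n)
    (p : {p : F × F // p ≠ (0, 0)}) :
    {v | Rel0 ω k (vmk ω k p) v}.ncard = k := by
  rw [class_eq_image hω0 hN hk hωgen p, Set.ncard_coe_finset]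
  rw [Finset.card_image_of_injOn, Finset.card_range]
  intro i hi j hj hij
  simp only [Finset.coe_range, Set.mem_Iio] at hi hj
  obtain ⟨g, hg, hij'⟩ := (vmk_eq_iff hω0 hN).mp hij
  obtain ⟨n, rfl⟩ := hg
  simp only [scl_coe, Prod.mk.injEq] at hij'
  have hcoord : ω ^ j = ω ^ i * ω ^ (k * n) := by
    rcases eq_or_ne p.1.1 0 with ha | ha
    · have hb : p.1.2 ≠ 0 := fun hb => p.2 (Prod.ext_iff.mpr ⟨ha, hb⟩)
      have h' := hij'.2
      rw [mul_assoc] at h'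
      exact mul_left_cancel₀ hb h'
    · have h' := hij'.1
      rw [mul_assoc] at h'
      exact mul_left_cancel₀ ha h'
  rw [← pow_add] at hcoord
  have hu : (Units.mk0 ω hω0) ^ j = (Units.mk0 ω hω0) ^ (i + k * n) := by
    apply Units.ext
    rw [Units.val_pow_eq_pow_val, Units.val_pow_eq_pow_val, Units.val_mk0]
    exact hcoord
  have hou : orderOf (Units.mk0 ω hω0) = orderOf ω := by
    have h := orderOf_units (y := Units.mk0 ω hω0)
    rw [Units.val_mk0] at h
    exact h.symm
  have hmod : j ≡ i + k * n [MOD orderOf ω] := by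
    rw [← hou]
    exact pow_eq_pow_iff_modEq.mp hu
  have hmodk : j ≡ i + k * n [MOD k] := hmod.of_dvd hkd
  have hik : j % k = i % k := by
    have h2 : (i + k * n) % k = i % k := Nat.add_mul_mod_self_left i k n
    unfold Nat.ModEq at hmodk
    omega
  rw [Nat.mod_eq_of_lt hi, Nat.mod_eq_of_lt hj] at hik
  omega

lemma class_eq_of_rel (hω0 : ω ≠ 0) (hN : 0 < orderOf ω) {u u' : Vtx F ω k}
    (h : Rel0 ω k u u') : {v | Rel0 ω k u v} = {v | Rel0 ω k u' v} := by
  ext w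
  simp only [Set.mem_setOf_eq]
  exact ⟨fun hw => rel0_trans hω0 hN (rel0_symm h) hw,
    fun hw => rel0_trans hω0 hN h hw⟩

/-- representative pairs for the `q + 1` projective points -/
def psi (ω : F) (k : ℕ) : Option F → Set (Vtx F ω k)
  | some b => {v | Rel0 ω k (vmk ω k ⟨(1, b), by simp⟩) v}
  | none => {v | Rel0 ω k (vmk ω k ⟨(0, 1), by simp⟩) v}

lemma classes_eq_range (hω0 : ω ≠ 0) (hN : 0 < orderOf ω) :
    {s : Set (Vtx F ω k) | ∃ u, s = {v | Rel0 ω k u v}} = Set.range (psi ω k) := by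
  ext s
  constructor
  · rintro ⟨u, rfl⟩
    obtain ⟨p, hp⟩ := Quot.exists_rep u
    rw [← hp]
    rcases eq_or_ne p.1.1 0 with ha | ha
    · refine ⟨none, ?_⟩
      show {v | Rel0 ω k (vmk ω k ⟨(0, 1), by simp⟩) v} = _
      refine (class_eq_of_rel hω0 hN ?_).symm
      apply rel0_of_det
      show p.1.2 * 0 - p.1.1 * 1 = 0
      rw [ha]; ring
    · refine ⟨some (p.1.2 / p.1.1), ?_⟩
      show {v | Rel0 ω k (vmk ω k ⟨(1, p.1.2 / p.1.1), by simp⟩) v} = _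
      refine (class_eq_of_rel hω0 hN ?_).symm
      apply rel0_of_det
      show p.1.2 * 1 - p.1.1 * (p.1.2 / p.1.1) = 0
      field_simp
      ring
  · rintro ⟨o, rfl⟩
    cases o with
    | none => exact ⟨_, rfl⟩
    | some b => exact ⟨_, rfl⟩

lemma psi_injective (hω0 : ω ≠ 0) (hN : 0 < orderOf ω) :
    Function.Injective (psi ω k) := by
  intro o o' h
  have hrel : ∀ (p p' : {p : F × F // p ≠ (0, 0)}),
      ({v | Rel0 ω k (vmk ω k p) v} : Set (Vtx F ω k)) = {v | Rel0 ω k (vmk ω k p') v} →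
      p.1.2 * p'.1.1 - p.1.1 * p'.1.2 = 0 := by
    intro p p' hs
    have h1 : vmk ω k p' ∈ {v | Rel0 ω k (vmk ω k p) v} := by
      rw [hs]; exact rel0_refl
    exact (rel0_iff hω0 hN).mp h1 p p' rfl rfl
  match o, o' with
  | none, none => rfl
  | some b, some b' =>
    have hd : b * 1 - 1 * b' = 0 := hrel ⟨(1, b), by simp⟩ ⟨(1, b'), by simp⟩ h
    have : b = b' := by linear_combination hd
    rw [this]
  | some b, none =>
    have hd : b * 0 - 1 * 1 = 0 := hrel ⟨(1, b), by simp⟩ ⟨(0, 1), by simp⟩ h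
    exact absurd (by linear_combination -hd : (1 : F) = 0) one_ne_zero
  | none, some b =>
    have hd : (1 : F) * 1 - 0 * b = 0 := hrel ⟨(0, 1), by simp⟩ ⟨(1, b), by simp⟩ h
    exact absurd (by linear_combination hd : (1 : F) = 0) one_ne_zero

end Stmt14Aux

open Stmt14Aux in
/-- `Γ_0`, the color-0 subgraph of `M_k(q)`, is the disjoint union of `q + 1`
color-0 cliques of order `k`: `Rel0` is an equivalence relation with exactly
`q + 1` classes, each of size `k`, and within each class every pair of distinct
vertices is joined by two oppositely oriented color-0 edges. -/
theorem stmt_14 (k : ℕ) (hk2 : 2 ≤ k) (hke : Even k)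
    (F : Type) [Field F] [Fintype F]
    (hq : Fintype.card F % (2 * k) = k + 1)
    (ω : F) (hω : ∀ x : F, x ≠ 0 → ∃ n : ℕ, x = ω ^ n) :
    Equivalence (Rel0 ω k) ∧
    {s : Set (Vtx F ω k) | ∃ u, s = {v | Rel0 ω k u v}}.ncard
        = Fintype.card F + 1 ∧
    (∀ u : Vtx F ω k, {v | Rel0 ω k u v}.ncard = k) ∧
    (∀ u v : Vtx F ω k, Rel0 ω k u v → u ≠ v →
      Edge ω k u v 0 ∧ Edge ω k v u 0) := by
  classical
  have hq3 : 3 ≤ Fintype.card F := by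
    have h1 : Fintype.card F % (2 * k) ≤ Fintype.card F := Nat.mod_le _ _
    omega
  have hω0 : ω ≠ 0 := by
    intro h
    subst h
    have h01 : ∀ x : F, x = 0 ∨ x = 1 := by
      intro x
      rcases eq_or_ne x 0 with hx | hx
      · exact Or.inl hx
      · obtain ⟨n, hn⟩ := hω x hx
        cases n with
        | zero => exact Or.inr (by simpa using hn)
        | succ m => exact absurd (by rw [hn]; simp : x = 0) hx
    have hsub : (Finset.univ : Finset F) ⊆ {0, 1} := fun x _ => by
      rcases h01 x with h | h <;> simp [h]
    have hcard := Finset.card_le_card hsub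
    have h2 : ({0, 1} : Finset F).card ≤ 2 :=
      le_trans (Finset.card_insert_le _ _) (by simp)
    rw [Finset.card_univ] at hcard
    omega
  -- order of ω
  have hunit : ∀ x : Fˣ, x ∈ Subgroup.zpowers (Units.mk0 ω hω0) := by
    intro x
    obtain ⟨n, hn⟩ := hω x x.ne_zero
    rw [Subgroup.mem_zpowers_iff]
    refine ⟨n, ?_⟩
    apply Units.ext
    rw [zpow_natCast, Units.val_pow_eq_pow_val, Units.val_mk0]
    exact hn.symm
  have hord_u : orderOf (Units.mk0 ω hω0) = Nat.card Fˣ :=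
    orderOf_eq_card_of_forall_mem_zpowers hunit
  have hordω : orderOf ω = Fintype.card F - 1 := by
    have h1 : orderOf ((Units.mk0 ω hω0 : Fˣ) : F) = orderOf (Units.mk0 ω hω0) :=
      orderOf_units
    rw [Units.val_mk0] at h1
    rw [h1, hord_u, Nat.card_eq_fintype_card, Fintype.card_units]
  have hN : 0 < orderOf ω := by rw [hordω]; omega
  have hkd : k ∣ orderOf ω := by
    rw [hordω]
    have hdecomp : Fintype.card F = 2 * k * (Fintype.card F / (2 * k)) + (k + 1) := by
      conv_lhs => rw [← Nat.div_add_mod (Fintype.card F) (2 * k)]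
      rw [hq]
    refine ⟨2 * (Fintype.card F / (2 * k)) + 1, ?_⟩
    have hring : k * (2 * (Fintype.card F / (2 * k)) + 1) =
        2 * k * (Fintype.card F / (2 * k)) + k := by ring
    omega
  refine ⟨⟨fun _ => rel0_refl, fun h => rel0_symm h,
      fun h1 h2 => rel0_trans hω0 hN h1 h2⟩, ?_, ?_, ?_⟩
  · rw [classes_eq_range hω0 hN, ← Set.image_univ,
      Set.ncard_image_of_injective _ (psi_injective hω0 hN), Set.ncard_univ,
      Nat.card_eq_fintype_card, Fintype.card_option]
  · intro u
    obtain ⟨p, hp⟩ := Quot.exists_rep u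
    rw [← hp]
    exact class_ncard hω0 hN (by omega) hkd hω p
  · rintro u v (rfl | ⟨h1, h2⟩) hne
    · exact absurd rfl hne
    · exact ⟨h1, h2⟩
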